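/- Let G be a finite group, x an involution, α = σ_x, and S_i = {a_i, α(a_i⁻¹)} for i = 1,2 generalized Cayley subsets with x·a₁ of odd order m₁ and x·a₂ of odd order m₂, m₁ ≠ m₂. Then GC(G, S₁, α) and GC(G, S₂, α) are not isomorphic as graphs. -/

import Mathlib

lemma aux_card {G : Type*} [Group G] [Fintype G] (x a : G) (hx : x ^ 2 = 1)
    (hx1 : x ≠ 1)
    (hloop : ∀ g : G, x * g * x * g⁻¹ ∉ ({a, x * a⁻¹ * x} : Set G))
    (m : ℕ) (hm : m = orderOf (x * a)) (hodd : Odd m) (g₀ : G) :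
    {h | (SimpleGraph.fromRel fun g h : G =>
      x * g⁻¹ * x * h ∈ ({a, x * a⁻¹ * x} : Set G)).Reachable g₀ h}.ncard = 2 * m := by
  have hxx : x * x = 1 := by rw [← sq, hx]
  have hxinv : x⁻¹ = x := inv_eq_of_mul_eq_one_right hxx
  have h2 : ∀ t : G, x * (x * t) = t := fun t => by rw [← mul_assoc, hxx, one_mul]
  set f : G → G := fun g => x * g * x * a with hf
  set Γ := SimpleGraph.fromRel fun g h : G =>
      x * g⁻¹ * x * h ∈ ({a, x * a⁻¹ * x} : Set G) with hΓ
  have hm0 : m ≠ 0 := by rintro rfl; simp [Nat.odd_iff] at hodd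
  have h2m : ¬ (2 ∣ m) := by rcases hodd with ⟨t, rfl⟩; omega
  -- iterate formula
  have hiter : ∀ (n : ℕ) (g : G), f^[n] g = x ^ n * g * (x * a) ^ n := by
    intro n
    induction n with
    | zero => intro g; simp
    | succ n ih =>
      intro g
      rw [Function.iterate_succ_apply', ih, hf]
      simp only [pow_succ, pow_succ']
      group
  -- injectivity of f
  have hfinj : Function.Injective f := by
    intro g g' h
    simp only [hf] at h
    exact mul_left_cancel (mul_right_cancel (mul_right_cancel h))
  -- period 2m
  have hxam : (x * a) ^ m = 1 := by rw [hm]; exact pow_orderOf_eq_one _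
  have hperiod : ∀ g : G, f^[2 * m] g = g := by
    intro g
    rw [hiter, pow_mul, hx, one_pow, one_mul, mul_comm 2 m, pow_mul, hxam, one_pow, mul_one]
  have hox : orderOf x = 2 := orderOf_eq_prime hx hx1
  -- minimality of the period
  have hmin : ∀ n : ℕ, 0 < n → n < 2 * m → ∀ g : G, f^[n] g ≠ g := by
    intro n hn hlt g heq
    rw [hiter] at heq
    rcases Nat.even_or_odd n with he | ho
    · obtain ⟨k, rfl⟩ := he
      have hxn : x ^ (k + k) = 1 := by rw [← two_mul, pow_mul, hx, one_pow]
      rw [hxn, one_mul] at heq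
      have hpow : (x * a) ^ (k + k) = 1 := mul_eq_left.mp heq
      have hdvd : m ∣ k + k := hm ▸ orderOf_dvd_of_pow_eq_one hpow
      have hco : Nat.Coprime m 2 :=
        (Nat.Prime.coprime_iff_not_dvd Nat.prime_two |>.mpr h2m).symm
      have hmk : m ∣ k := by
        have : m ∣ 2 * k := by rwa [two_mul]
        exact Nat.Coprime.dvd_of_dvd_mul_left hco this
      have hk0 : 0 < k := by omega
      have := Nat.le_of_dvd hk0 hmk
      omega
    · obtain ⟨k, rfl⟩ := ho
      have hxn : x ^ (2 * k + 1) = x := by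
        rw [pow_succ, pow_mul, hx, one_pow, one_mul]
      rw [hxn] at heq
      have hcj : (x * a) ^ (2 * k + 1) = (x * g)⁻¹ * g := by
        rw [eq_inv_mul_iff_mul_eq]; exact heq
      have hcj2 : (x * a) ^ (2 * k + 1) = g⁻¹ * x⁻¹ * g := by
        rw [hcj, mul_inv_rev]
      have hdL : orderOf ((x * a) ^ (2 * k + 1)) ∣ m := by
        apply orderOf_dvd_of_pow_eq_one
        rw [← pow_mul, mul_comm, pow_mul, hxam, one_pow]
      have hR : orderOf (g⁻¹ * x⁻¹ * g) = 2 := by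
        have hcon : g⁻¹ * x⁻¹ * g = (MulAut.conj g⁻¹) x⁻¹ := by simp [MulAut.conj]
        rw [hcon]
        exact (orderOf_injective (MulAut.conj g⁻¹).toMonoidHom
          (MulEquiv.injective _) x⁻¹).trans ((orderOf_inv x).trans hox)
      rw [hcj2, hR] at hdL
      exact h2m hdL
  -- equation solving
  have e1 : ∀ u v : G, x * u⁻¹ * x * v = a ↔ v = f u := by
    intro u v
    constructor
    · intro h
      have h' : x * u⁻¹ * x * f u = a := by
        simp only [hf, mul_inv_rev, inv_inv, hxinv]
        simp [mul_assoc, h2]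
      exact mul_left_cancel (h.trans h'.symm)
    · rintro rfl
      simp only [hf, mul_inv_rev, inv_inv, hxinv]
      simp [mul_assoc, h2]
  have e2 : ∀ u v : G, x * u⁻¹ * x * v = x * a⁻¹ * x ↔ u = f v := by
    intro u v
    have he : ∀ w : G, x * (f w)⁻¹ * x * w = x * a⁻¹ * x := by
      intro w
      simp only [hf, mul_inv_rev, inv_inv, hxinv]
      simp [mul_assoc, h2]
    constructor
    · intro h
      have h' := h.trans (he v).symm
      -- x * u⁻¹ * x * v = x * (f v)⁻¹ * x * v
      have := mul_right_cancel (mul_right_cancel h')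
      exact inv_injective (mul_left_cancel this)
    · rintro rfl; exact he v
  -- f has no fixed points
  have hne_f : ∀ g : G, f g ≠ g := by
    intro g heq
    apply hloop g⁻¹
    have : x * g⁻¹ * x * g = a := (e1 g g).mpr heq.symm
    rw [inv_inv, this]
    exact Set.mem_insert _ _
  -- adjacency characterization
  have hAdj : ∀ g h : G, Γ.Adj g h ↔ g ≠ h ∧ (h = f g ∨ g = f h) := by
    intro g h
    rw [hΓ, SimpleGraph.fromRel_adj]
    simp only [Set.mem_insert_iff, Set.mem_singleton_iff, e1, e2]
    tauto
  have hAdjf : ∀ g : G, Γ.Adj g (f g) := by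
    intro g
    rw [hAdj]
    exact ⟨fun h => hne_f g h.symm, Or.inl rfl⟩
  -- reachability = orbit
  have hstep : ∀ u v : G, Γ.Adj u v → ∀ k : ℕ, f^[k] g₀ = u → ∃ j : ℕ, f^[j] g₀ = v := by
    intro u v hadj k hk
    rw [hAdj] at hadj
    rcases hadj.2 with h1 | h1
    · exact ⟨k + 1, by rw [Function.iterate_succ_apply', hk, ← h1]⟩
    · refine ⟨(2 * m - 1) + k, ?_⟩
      rw [Function.iterate_add_apply, hk, h1, ← Function.iterate_succ_apply]
      have h21 : (2 * m - 1).succ = 2 * m := by omega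
      rw [h21, hperiod]
  have hwalk : ∀ (u v : G), Γ.Walk u v → (∃ k : ℕ, f^[k] g₀ = u) → ∃ j : ℕ, f^[j] g₀ = v := by
    intro u v w
    induction w with
    | nil => exact id
    | cons hadj w ih =>
      rintro ⟨k, hk⟩
      exact ih (hstep _ _ hadj k hk)
  have hreach : ∀ h : G, Γ.Reachable g₀ h ↔ ∃ k : ℕ, f^[k] g₀ = h := by
    intro h
    constructor
    · intro hr
      obtain ⟨w⟩ := hr
      exact hwalk _ _ w ⟨0, rfl⟩
    · rintro ⟨k, rfl⟩
      induction k with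
      | zero => exact SimpleGraph.Reachable.refl _
      | succ k ih =>
        refine ih.trans ?_
        rw [Function.iterate_succ_apply']
        exact (hAdjf _).reachable
  -- the reachable set is the orbit, of size exactly 2m
  have hfid : f^[2 * m] = id := funext hperiod
  have hsets : {h | Γ.Reachable g₀ h} = Set.range (fun k : Fin (2 * m) => f^[(k : ℕ)] g₀) := by
    ext h
    simp only [Set.mem_setOf_eq, Set.mem_range, hreach]
    constructor
    · rintro ⟨k, rfl⟩
      have h2mpos : 0 < 2 * m := by omega
      refine ⟨⟨k % (2 * m), Nat.mod_lt _ h2mpos⟩, ?_⟩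
      conv_rhs => rw [← Nat.div_add_mod k (2 * m)]
      rw [Nat.add_comm, Function.iterate_add_apply, Function.iterate_mul, hfid,
        Function.iterate_id, id_eq]
    · rintro ⟨k, rfl⟩
      exact ⟨k, rfl⟩
  have hinj : Function.Injective (fun k : Fin (2 * m) => f^[(k : ℕ)] g₀) := by
    intro i j hij
    simp only at hij
    rcases le_total (i : ℕ) (j : ℕ) with hle | hle
    · by_contra hne'
      have hlt : (j : ℕ) - (i : ℕ) > 0 := by
        have : (i : ℕ) ≠ (j : ℕ) := fun h => hne' (Fin.ext h)
        omega
      have h1 : f^[(i : ℕ)] (f^[(j : ℕ) - (i : ℕ)] g₀) = f^[(i : ℕ)] g₀ := by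
        rw [← Function.iterate_add_apply]
        rw [show (i : ℕ) + ((j : ℕ) - (i : ℕ)) = (j : ℕ) by omega]
        exact hij.symm
      have h2 := Function.Injective.iterate hfinj (i : ℕ) h1
      exact hmin _ hlt (by omega) g₀ h2
    · by_contra hne'
      have hlt : (i : ℕ) - (j : ℕ) > 0 := by
        have : (i : ℕ) ≠ (j : ℕ) := fun h => hne' (Fin.ext h)
        omega
      have h1 : f^[(j : ℕ)] (f^[(i : ℕ) - (j : ℕ)] g₀) = f^[(j : ℕ)] g₀ := by
        rw [← Function.iterate_add_apply]
        rw [show (j : ℕ) + ((i : ℕ) - (j : ℕ)) = (i : ℕ) by omega]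
        exact hij
      have h2 := Function.Injective.iterate hfinj (j : ℕ) h1
      exact hmin _ hlt (by omega) g₀ h2
  rw [hsets, ← Nat.card_coe_set_eq, Nat.card_range_of_injective hinj,
    Nat.card_eq_fintype_card, Fintype.card_fin]

theorem stmt18 {G : Type*} [Group G] [Fintype G] (x a₁ a₂ : G) (hx : x ^ 2 = 1) (hx1 : x ≠ 1)
    (S₁ S₂ : Set G) (hS₁ : S₁ = {a₁, x * a₁⁻¹ * x}) (hS₂ : S₂ = {a₂, x * a₂⁻¹ * x})
    (hloop₁ : ∀ g : G, x * g * x * g⁻¹ ∉ S₁) (hloop₂ : ∀ g : G, x * g * x * g⁻¹ ∉ S₂)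
    (m₁ m₂ : ℕ) (hm₁ : m₁ = orderOf (x * a₁)) (hm₂ : m₂ = orderOf (x * a₂))
    (hodd₁ : Odd m₁) (hodd₂ : Odd m₂) (hne : m₁ ≠ m₂) :
    IsEmpty ((SimpleGraph.fromRel fun g h : G => x * g⁻¹ * x * h ∈ S₁) ≃g
      (SimpleGraph.fromRel fun g h : G => x * g⁻¹ * x * h ∈ S₂)) := by
  subst hS₁ hS₂
  constructor
  intro φ
  set Γ₁ := SimpleGraph.fromRel fun g h : G =>
      x * g⁻¹ * x * h ∈ ({a₁, x * a₁⁻¹ * x} : Set G) with hΓ₁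
  set Γ₂ := SimpleGraph.fromRel fun g h : G =>
      x * g⁻¹ * x * h ∈ ({a₂, x * a₂⁻¹ * x} : Set G) with hΓ₂
  have hc1 := aux_card x a₁ hx hx1 hloop₁ m₁ hm₁ hodd₁ (1 : G)
  have hc2 := aux_card x a₂ hx hx1 hloop₂ m₂ hm₂ hodd₂ (φ 1)
  have himg : φ '' {h | Γ₁.Reachable 1 h} = {h | Γ₂.Reachable (φ 1) h} := by
    ext h'
    simp only [Set.mem_image, Set.mem_setOf_eq]
    constructor
    · rintro ⟨h, hh, rfl⟩
      exact SimpleGraph.Reachable.map φ.toHom hh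
    · intro hh
      refine ⟨φ.symm h', ?_, by simp⟩
      have := SimpleGraph.Reachable.map φ.symm.toHom hh
      simpa using this
  have hcard : (φ '' {h | Γ₁.Reachable 1 h}).ncard = {h | Γ₁.Reachable 1 h}.ncard :=
    Set.ncard_image_of_injective _ φ.toEquiv.injective
  rw [himg] at hcard
  rw [hc1, hc2] at hcard
  omega
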